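/- (Theorem 3, coverage of the adaptive Sobel confidence interval when αβ is not degenerate at (0,0).) Let δ ∈ (0,1) and let c₁ > 0 satisfy Φ(c₁) = 1 − δ/2, and let c₂ ∈ ℝ be arbitrary. For each n let S_n be a real random variable on a probability space (Ω_n, μ_n) such that the laws of S_n converge in distribution to the standard Gaussian gaussianReal 0 1, and let A_n ⊆ Ω_n be measurable events with μ_n(A_n) → 1. Then μ_n( ({|S_n| ≤ c₁} ∩ A_n) ∪ ({|S_n| ≤ c₂} ∩ A_nᶜ) ) → 1 − δ as n → ∞. -/

import Mathlib

open MeasureTheory ProbabilityTheory Set Filter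
open scoped NNReal

open OmegaCompletePartialOrder in
/-- The sup of an ω-chain of measures, evaluated at a measurable set, is at most the sup of
evaluations. -/
lemma measure_ωSup_apply_le {α : Type*} [MeasurableSpace α]
    (c : Chain (Measure α)) {s : Set α} (hs : MeasurableSet s) :
    (ωSup c) s ≤ ⨆ i, c i s := by
  -- the pointwise sup is a measure
  have hswap : ∀ g : ℕ → ℕ → ENNReal, (∀ n, Monotone fun i => g i n) →
      ⨆ i, ∑' n, g i n = ∑' n, ⨆ i, g i n := by
    intro g hg
    refine le_antisymm (iSup_le fun i => ENNReal.tsum_le_tsum fun n => le_iSup (fun j => g j n) i)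
      ?_
    rw [ENNReal.tsum_eq_iSup_sum]
    refine iSup_le fun t => ?_
    rw [ENNReal.finsetSum_iSup_of_monotone hg]
    exact iSup_mono fun i => ENNReal.sum_le_tsum t
  set m₀ : Measure α := Measure.ofMeasurable (fun t _ => ⨆ i, c i t)
    (by simp)
    (by
      intro f hf hd
      have h1 : ∀ i : ℕ, c i (⋃ n, f n) = ∑' n, c i (f n) := fun i => measure_iUnion hd hf
      simp only [h1]
      exact hswap (fun i n => c i (f n)) fun n i j hij => Measure.le_iff'.1 (c.monotone hij) (f n))
    with hm₀
  have hm₀app : ∀ t : Set α, MeasurableSet t → m₀ t = ⨆ i, c i t := fun t ht =>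
    Measure.ofMeasurable_apply t ht
  have hle : ωSup c ≤ m₀ := by
    refine iSup_le fun i => ?_
    rw [Measure.le_iff]
    intro t ht
    rw [hm₀app t ht]
    exact le_iSup (fun j => c j t) i
  calc (ωSup c) s ≤ m₀ s := Measure.le_iff.1 hle s hs
    _ = ⨆ i, c i s := hm₀app s hs

/-- Theorem 3, coverage of the adaptive Sobel CI when `(α,β) ≠ (0,0)`:
If `c₁ > 0` is the `(1-δ/2)`-quantile of `N(0,1)`, the laws of `S n` converge weakly to
`N(0,1)`, and `μ n (A n) → 1`, then the coverage probability
`μ n (({|S n| ≤ c₁} ∩ A n) ∪ ({|S n| ≤ c₂} ∩ (A n)ᶜ))` converges to `1 - δ`. -/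
theorem asobel_ci_coverage_nondegenerate
    (δ : ℝ) (hδ : δ ∈ Ioo (0:ℝ) 1) (c₁ : ℝ) (hc₁pos : 0 < c₁)
    (hc₁ : gaussianReal 0 1 (Iic c₁) = ENNReal.ofReal (1 - δ / 2))
    (c₂ : ℝ)
    {Ω : ℕ → Type*} [∀ n, MeasurableSpace (Ω n)]
    (μ : ∀ n, Measure (Ω n)) [∀ n, IsProbabilityMeasure (μ n)]
    (S : ∀ n, Ω n → ℝ) (hS : ∀ n, Measurable (S n))
    (hconv : Tendsto (β := ProbabilityMeasure ℝ)
      (fun n => (⟨Measure.map (S n) (μ n),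
        Measure.isProbabilityMeasure_map (hS n).aemeasurable⟩ : ProbabilityMeasure ℝ))
      atTop (nhds ⟨gaussianReal 0 1, inferInstance⟩))
    (A : ∀ n, Set (Ω n)) (hA : ∀ n, MeasurableSet (A n))
    (hA1 : Tendsto (fun n => μ n (A n)) atTop (nhds 1)) :
    Tendsto
      (fun n => μ n (({ω | |S n ω| ≤ c₁} ∩ A n) ∪ ({ω | |S n ω| ≤ c₂} ∩ (A n)ᶜ)))
      atTop (nhds (ENNReal.ofReal (1 - δ))) := by
  have hδ0 := hδ.1
  have hδ1 := hδ.2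
  set ν : Measure ℝ := gaussianReal 0 1 with hν
  have hac := gaussianReal_absolutelyContinuous 0 (one_ne_zero : (1:ℝ≥0) ≠ 0)
  have hatom : ∀ x : ℝ, ν {x} = 0 := fun x => hac (measure_singleton x)
  -- symmetry of the standard Gaussian
  have hmap : ν.map (fun x => (-1 : ℝ) * x) = ν := by
    rw [hν, gaussianReal_map_const_mul]
    norm_num
  have hIic_neg : ν (Iic (-c₁)) = ENNReal.ofReal (δ / 2) := by
    have h1 : ν (Iic (-c₁)) = ν (Ici c₁) := by
      calc ν (Iic (-c₁)) = ν.map (fun x => (-1:ℝ) * x) (Iic (-c₁)) := by rw [hmap]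
        _ = ν ((fun x => (-1:ℝ) * x) ⁻¹' Iic (-c₁)) :=
            Measure.map_apply (by fun_prop) measurableSet_Iic
        _ = ν (Ici c₁) := by
            congr 1; ext x
            simp only [mem_preimage, mem_Iic, mem_Ici]
            constructor <;> intro h <;> linarith
    have h2 : ν (Iio c₁) = ν (Iic c₁) := measure_congr (Iio_ae_eq_Iic' (hatom c₁))
    have h3 : ν (Ici c₁) = 1 - ν (Iio c₁) := by
      rw [← compl_Iio, measure_compl measurableSet_Iio (measure_ne_top _ _), measure_univ]
    rw [h1, h3, h2, hc₁]
    rw [show (1 : ENNReal) = ENNReal.ofReal 1 by simp,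
      ← ENNReal.ofReal_sub 1 (by linarith)]
    norm_num
  have hIoc : ν (Ioc (-c₁) c₁) = ENNReal.ofReal (1 - δ) := by
    have hd : Disjoint (Iic (-c₁)) (Ioc (-c₁) c₁) := Iic_disjoint_Ioc le_rfl
    have hu : Iic (-c₁) ∪ Ioc (-c₁) c₁ = Iic c₁ := Iic_union_Ioc_eq_Iic (by linarith)
    have hm : ν (Iic (-c₁) ∪ Ioc (-c₁) c₁) = ν (Iic (-c₁)) + ν (Ioc (-c₁) c₁) :=
      measure_union hd measurableSet_Ioc
    rw [hu, hIic_neg] at hm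
    have hsplit : (gaussianReal 0 1 : Measure ℝ) (Iic c₁) = ν (Iic c₁) := rfl
    rw [show ν (Iic c₁) = ENNReal.ofReal (1 - δ / 2) from hc₁] at hm
    have h2 : ENNReal.ofReal (1 - δ / 2)
        = ENNReal.ofReal (δ / 2) + ENNReal.ofReal (1 - δ) := by
      rw [← ENNReal.ofReal_add (by linarith) (by linarith)]
      ring_nf
    rw [h2] at hm
    exact ((ENNReal.add_right_inj (by simp)).mp hm).symm
  have hE : ν (Icc (-c₁) c₁) = ENNReal.ofReal (1 - δ) := by
    rw [← measure_congr (Ioc_ae_eq_Icc' (hatom (-c₁)))]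
    exact hIoc
  -- convergence in the Scott topology of measures
  haveI : ∀ n, IsProbabilityMeasure (Measure.map (S n) (μ n)) := fun n =>
    Measure.isProbabilityMeasure_map (hS n).aemeasurable
  have hprob : ∀ n, Measure.map (S n) (μ n) (Icc (-c₁) c₁) ≤ 1 := fun n =>
    prob_le_one
  have hEcompl : ν (Icc (-c₁) c₁)ᶜ = 1 - ν (Icc (-c₁) c₁) := by
    rw [measure_compl measurableSet_Icc (measure_ne_top _ _), measure_univ]
  -- evaluation at the interval converges
  have hmapconv : Tendsto (fun n => Measure.map (S n) (μ n) (Icc (-c₁) c₁)) atTop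
      (nhds (ν (Icc (-c₁) c₁))) := by
    exact ProbabilityMeasure.tendsto_measure_of_null_frontier_of_tendsto' hconv (by
      show ν (frontier (Icc (-c₁) c₁)) = 0
      rw [frontier_Icc (by linarith), insert_eq]
      exact measure_union_null (hatom _) (hatom _))
  have hBeq : ∀ n, Measure.map (S n) (μ n) (Icc (-c₁) c₁) = μ n {ω | |S n ω| ≤ c₁} := by
    intro n
    rw [Measure.map_apply (hS n) measurableSet_Icc]
    congr 1; ext ω
    simp [abs_le, and_comm]
  have hg : Tendsto (fun n => μ n {ω | |S n ω| ≤ c₁}) atTop (nhds (ENNReal.ofReal (1 - δ))) := by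
    rw [← hE]
    simpa only [hBeq] using hmapconv
  have hh : Tendsto (fun n => μ n (A n)ᶜ) atTop (nhds 0) := by
    have hcompl : ∀ n, μ n (A n)ᶜ = 1 - μ n (A n) := fun n => by
      rw [measure_compl (hA n) (measure_ne_top _ _), measure_univ]
    simp only [hcompl]
    have := ENNReal.Tendsto.sub (tendsto_const_nhds (x := (1 : ENNReal)) (f := atTop)) hA1
      (Or.inl ENNReal.one_ne_top)
    simpa using this
  set E := fun n => ({ω | |S n ω| ≤ c₁} ∩ A n) ∪ ({ω | |S n ω| ≤ c₂} ∩ (A n)ᶜ) with hEdef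
  have hup : ∀ n, μ n (E n) ≤ μ n {ω | |S n ω| ≤ c₁} + μ n (A n)ᶜ := fun n =>
    (measure_mono (union_subset_union inter_subset_left inter_subset_right)).trans
      (measure_union_le _ _)
  have hlo : ∀ n, μ n {ω | |S n ω| ≤ c₁} - μ n (A n)ᶜ ≤ μ n (E n) := by
    intro n
    rw [tsub_le_iff_right]
    calc μ n {ω | |S n ω| ≤ c₁}
        ≤ μ n (({ω | |S n ω| ≤ c₁} ∩ A n) ∪ (A n)ᶜ) := by
          apply measure_mono
          intro ω hω
          by_cases h : ω ∈ A n
          · exact Or.inl ⟨hω, h⟩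
          · exact Or.inr h
      _ ≤ μ n ({ω | |S n ω| ≤ c₁} ∩ A n) + μ n (A n)ᶜ := measure_union_le _ _
      _ ≤ μ n (E n) + μ n (A n)ᶜ :=
          add_le_add_left (measure_mono subset_union_left) _
  have hlim_lo : Tendsto (fun n => μ n {ω | |S n ω| ≤ c₁} - μ n (A n)ᶜ) atTop
      (nhds (ENNReal.ofReal (1 - δ))) := by
    have := ENNReal.Tendsto.sub hg hh (Or.inr ENNReal.zero_ne_top)
    simpa using this
  have hlim_up : Tendsto (fun n => μ n {ω | |S n ω| ≤ c₁} + μ n (A n)ᶜ) atTop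
      (nhds (ENNReal.ofReal (1 - δ))) := by
    have := hg.add hh
    simpa using this
  exact tendsto_of_tendsto_of_tendsto_of_le_of_le hlim_lo hlim_up hlo hup
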